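/- GR(1) satisfaction is invariant under removal of events not occurring in the formula: let φ = ⋀_{i≤n}□◇φᵢ ⟹ ⋀_{j≤m}□◇γⱼ be a GR(1) formula over Σ whose atomic events all lie in Σ∖L, and such that each φᵢ and each γⱼ evaluates to false when all of its atomic events are false. Let π ∈ Σ^ω be an infinite trace such that the projection π′ = P_{Σ∖L}(π), obtained by erasing from π all events in L, is infinite. Then π ⊨ φ if and only if π′ ⊨ φ. -/

import Mathlib

namespace CompSynth

/-- A labelled transition system over event labels `E`. -/
structure LTS (E : Type) where
  State : Type
  finState : Finite State
  alph : Finset E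
  trans : State → E → State → Prop
  init : State

namespace LTS

variable {E : Type} [DecidableEq E]

/-- Parallel composition of two LTSs. -/
def par (M N : LTS E) : LTS E where
  State := M.State × N.State
  finState := by haveI := M.finState; haveI := N.finState; exact inferInstance
  alph := M.alph ∪ N.alph
  trans := fun s l t =>
    (M.trans s.1 l t.1 ∧ l ∈ M.alph ∧ l ∉ N.alph ∧ t.2 = s.2) ∨
    (N.trans s.2 l t.2 ∧ l ∈ N.alph ∧ l ∉ M.alph ∧ t.1 = s.1) ∨
    (M.trans s.1 l t.1 ∧ N.trans s.2 l t.2 ∧ l ∈ M.alph ∧ l ∈ N.alph)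
  init := (M.init, N.init)

/-- The trivial (one-state, empty-alphabet) LTS. -/
def unitLTS : LTS E where
  State := Unit
  finState := inferInstance
  alph := ∅
  trans := fun _ _ _ => False
  init := ()

/-- Parallel composition of a finite list of LTSs. -/
def parList : List (LTS E) → LTS E
  | [] => unitLTS
  | [M] => M
  | M :: Ms => M.par (parList Ms)

/-- Reachable states of an LTS. -/
inductive Reach (M : LTS E) : M.State → Prop
  | init : Reach M M.init
  | step {s l t} : Reach M s → M.trans s l t → Reach M t

/-- Finite runs (paths) between states, labelled by a word. -/
inductive Path (M : LTS E) : M.State → List E → M.State → Prop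
  | nil (s : M.State) : Path M s [] s
  | cons {s t u : M.State} {l : E} {w : List E} :
      M.trans s l t → Path M t w u → Path M s (l :: w) u

/-- Finite traces of an LTS. -/
def FinTr (M : LTS E) (w : List E) : Prop := ∃ s, Path M M.init w s

/-- Infinite traces of an LTS. -/
def InfTr (M : LTS E) (π : ℕ → E) : Prop :=
  ∃ ρ : ℕ → M.State, ρ 0 = M.init ∧ ∀ i, M.trans (ρ i) (π i) (ρ (i + 1))

/-- No state has two outgoing transitions with the same label. -/
def Deterministic (M : LTS E) : Prop :=
  ∀ s l t t', M.trans s l t → M.trans s l t' → t = t'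

/-- Every reachable state has an outgoing transition. -/
def DeadlockFree (M : LTS E) : Prop :=
  ∀ s, Reach M s → ∃ l t, M.trans s l t

/-- `C` is legal for `M` w.r.t. the uncontrollable events `Eu`. -/
def Legal (M C : LTS E) (Eu : Finset E) : Prop :=
  ∀ p : (M.par C).State, Reach (M.par C) p → ∀ l ∈ Eu,
    ((∃ q, (M.par C).trans p l q) ↔ (∃ t, M.trans p.1 l t))

/-- Restriction of an LTS to a set of states containing the initial state. -/
def restrict (M : LTS E) (S' : Set M.State) (h : M.init ∈ S') : LTS E where
  State := {s // s ∈ S'}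
  finState := by haveI := M.finState; exact inferInstance
  alph := M.alph
  trans := fun x l y => M.trans x.1 l y.1
  init := ⟨M.init, h⟩

/-- The controlled subplant of `M` by the safe controller `restrict M S' h`
with respect to the uncontrolled shared events `Ω`: transitions of the safe
controller together with transitions to a fresh deadlock state `⊥` (here `none`)
on events of `Ω` enabled in `M` but removed by the safe controller. -/
def ctrlSub (M : LTS E) (S' : Set M.State) (h : M.init ∈ S') (Ω : Finset E) : LTS E where
  State := Option {s // s ∈ S'}
  finState := by
    haveI := M.finState
    haveI := Fintype.ofFinite M.State
    haveI : Finite {s // s ∈ S'} := inferInstance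
    haveI := Fintype.ofFinite {s // s ∈ S'}
    exact inferInstance
  alph := M.alph
  trans := fun x l y =>
    match x, y with
    | some a, some b => M.trans a.1 l b.1
    | some a, none =>
        l ∈ Ω ∧ (∃ t, M.trans a.1 l t) ∧ ∀ t, t ∈ S' → ¬ M.trans a.1 l t
    | none, _ => False
  init := some ⟨M.init, h⟩

/-- Quotient LTS by a relation on states. -/
def quot (M : LTS E) (r : M.State → M.State → Prop) : LTS E where
  State := Quot r
  finState := by
    haveI := M.finState
    exact Finite.of_surjective (Quot.mk r) (fun q => Quot.exists_rep q)
  alph := M.alph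
  trans := fun qs l qt => ∃ s t, M.trans s l t ∧ Quot.mk r s = qs ∧ Quot.mk r t = qt
  init := Quot.mk r M.init

/-- Removal of self-loop transitions labelled by events in `μs`. -/
def rmLoops (P : LTS E) (μs : Finset E) : LTS E :=
  { P with trans := fun s l t => P.trans s l t ∧ ¬(l ∈ μs ∧ t = s) }

/-- Synthesis observational equivalence on `M` w.r.t. local events `Υ`,
with controllable events `Ec` (uncontrollable events are those not in `Ec`). -/
def IsSOE (M : LTS E) (Ec Υ : Finset E) (r : M.State → M.State → Prop) : Prop :=
  Equivalence r ∧
  (∀ x₁ x₂ y₁ u, r x₁ x₂ → u ∈ M.alph → u ∉ Ec → M.trans x₁ u y₁ →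
    ∃ (π₁ π₂ : List E) (y₂ : M.State),
      (∀ l ∈ π₁, l ∈ Υ ∧ l ∉ Ec) ∧ (∀ l ∈ π₂, l ∈ Υ ∧ l ∉ Ec) ∧
      Path M x₂ (π₁ ++ (if u ∈ Υ then [] else [u]) ++ π₂) y₂ ∧ r y₁ y₂) ∧
  (∀ x₁ x₂ y₁ c, r x₁ x₂ → c ∈ Ec → M.trans x₁ c y₁ →
    ∃ (n : ℕ) (xs : Fin (n + 1) → M.State) (τ : Fin n → E) (y₂ : M.State),
      xs 0 = x₂ ∧
      (∀ i : Fin n, M.trans (xs i.castSucc) (τ i) (xs i.succ) ∧ τ i ∈ Υ ∧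
        (τ i ∈ Ec → r x₁ (xs i.succ))) ∧
      (if c ∈ Υ then y₂ = xs (Fin.last n) else M.trans (xs (Fin.last n)) c y₂) ∧
      r y₁ y₂)

/-- `l` is a self-loop event added by the `r`-reduction of `M`. -/
def SelfLoopAdded (M : LTS E) (r : M.State → M.State → Prop) (l : E) : Prop :=
  ∃ s t, M.trans s l t ∧ r s t ∧ s ≠ t

end LTS

/-- Syntax of LTL formulas over atomic events in `E`. -/
inductive LTL (E : Type) where
  | tru : LTL E
  | atom : E → LTL E
  | neg : LTL E → LTL E
  | orf : LTL E → LTL E → LTL E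
  | next : LTL E → LTL E
  | untl : LTL E → LTL E → LTL E

namespace LTL

variable {E : Type}

/-- Satisfaction of an LTL formula by an infinite trace at a position. -/
def satAt (π : ℕ → E) : LTL E → ℕ → Prop
  | tru, _ => True
  | atom e, i => π i = e
  | neg φ, i => ¬ satAt π φ i
  | orf φ ψ, i => satAt π φ i ∨ satAt π ψ i
  | next φ, i => satAt π φ (i + 1)
  | untl φ ψ, i => ∃ k, i ≤ k ∧ satAt π ψ k ∧ ∀ j, i ≤ j → j < k → satAt π φ j

/-- Satisfaction of an LTL formula by an infinite trace. -/
def sat (π : ℕ → E) (φ : LTL E) : Prop := satAt π φ 0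

def fls : LTL E := neg tru
def andf (φ ψ : LTL E) : LTL E := neg (orf (neg φ) (neg ψ))
def imp (φ ψ : LTL E) : LTL E := orf (neg φ) ψ
def ev (φ : LTL E) : LTL E := untl tru φ
def alw (φ : LTL E) : LTL E := neg (ev (neg φ))
def alwEv (φ : LTL E) : LTL E := alw (ev φ)
def conjList (l : List (LTL E)) : LTL E := l.foldr andf tru
def disjList (l : List (LTL E)) : LTL E := l.foldr orf fls

/-- The atomic events occurring in a formula. -/
def events [DecidableEq E] : LTL E → Finset E
  | tru => ∅
  | atom e => {e}
  | neg φ => events φ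
  | orf φ ψ => events φ ∪ events ψ
  | next φ => events φ
  | untl φ ψ => events φ ∪ events ψ

/-- Boolean combinations of atomic events (no temporal operators). -/
def isBool : LTL E → Prop
  | tru => True
  | atom _ => True
  | neg φ => isBool φ
  | orf φ ψ => isBool φ ∧ isBool ψ
  | next _ => False
  | untl _ _ => False

end LTL

variable {E : Type} [DecidableEq E]

/-- The GR(1) formula `⋀ □◇aᵢ ⟹ ⋀ □◇gⱼ`. -/
def GR1 (As Gs : List (LTL E)) : LTL E :=
  LTL.imp (LTL.conjList (As.map LTL.alwEv)) (LTL.conjList (Gs.map LTL.alwEv))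

/-- The boolean formula `⋀_{l ∈ μ} ¬l`. -/
noncomputable def finsetNegConj (μ : Finset E) : LTL E :=
  LTL.conjList (μ.toList.map fun l => LTL.neg (LTL.atom l))

/-- The formula `□◇(⋀_{l ∈ μ} ¬l) ⟹ φ`. -/
noncomputable def muGoal (μ : Finset E) (φ : LTL E) : LTL E :=
  LTL.imp (LTL.alwEv (finsetNegConj μ)) φ

open LTS

/-- `C` is a solution of the control problem `⟨P, Ec, φ⟩`. -/
def Solution (P : LTS E) (Ec : Finset E) (φ : LTL E) (C : LTS E) : Prop :=
  Deterministic C ∧ Legal P C (P.alph \ Ec) ∧ DeadlockFree (P.par C) ∧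
  ∀ π : ℕ → E, InfTr (P.par C) π → LTL.sat π φ

/-- `s` is a winning state of the control problem `⟨P, Ec, φ⟩`. -/
def Winning (P : LTS E) (Ec : Finset E) (φ : LTL E) (s : P.State) : Prop :=
  ∃ C : LTS E, Solution P Ec φ C ∧ ∃ c : C.State, Reach (C.par P) (c, s)

/-- Controllers of the synthesis tuple `(Ms, Cs, μ)`. -/
def Cont (Ec : Finset E) (φ : LTL E) (Ms Cs : List (LTS E)) (μ : Finset E) :
    Set (LTS E) :=
  { X | ∃ CM : LTS E, Solution (parList Ms) Ec (muGoal μ φ) CM ∧ X = parList (CM :: Cs) }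


lemma bool_dep {E : Type} (b : LTL E) (hb : b.isBool) :
    ∀ (σ σ' : ℕ → E) (i j : ℕ), σ i = σ' j → (LTL.satAt σ b i ↔ LTL.satAt σ' b j) := by
  induction b with
  | tru => intro σ σ' i j _; simp [LTL.satAt]
  | atom e => intro σ σ' i j h; simp [LTL.satAt, h]
  | neg φ ih => intro σ σ' i j h; simpa [LTL.satAt] using not_congr (ih hb σ σ' i j h)
  | orf φ ψ ih1 ih2 =>
      intro σ σ' i j h
      simpa [LTL.satAt] using or_congr (ih1 hb.1 σ σ' i j h) (ih2 hb.2 σ σ' i j h)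
  | next φ ih => exact hb.elim
  | untl φ ψ ih1 ih2 => exact hb.elim

lemma satAt_alwEv {E : Type} (σ : ℕ → E) (b : LTL E) (i : ℕ) :
    LTL.satAt σ (LTL.alwEv b) i ↔ ∀ k, i ≤ k → ∃ m, k ≤ m ∧ LTL.satAt σ b m := by
  simp only [LTL.alwEv, LTL.alw, LTL.ev, LTL.satAt]
  constructor
  · intro h k hk
    by_contra hc
    push_neg at hc
    exact h ⟨k, hk, fun ⟨m, hm, hsat, _⟩ => hc m hm hsat, fun _ _ _ => trivial⟩
  · rintro h ⟨k, hk, hneg, -⟩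
    obtain ⟨m, hm, hsat⟩ := h k hk
    exact hneg ⟨m, hm, hsat, fun _ _ _ => trivial⟩

lemma satAt_conjList {E : Type} (σ : ℕ → E) (l : List (LTL E)) (i : ℕ) :
    LTL.satAt σ (LTL.conjList l) i ↔ ∀ φ ∈ l, LTL.satAt σ φ i := by
  induction l with
  | nil => simp [LTL.conjList, LTL.satAt]
  | cons a l ih =>
      simp only [LTL.conjList, List.foldr, LTL.andf, LTL.satAt] at *
      rw [not_or, not_not, not_not, ih]
      simp [List.forall_mem_cons]

lemma alwEv_transfer {E : Type} [DecidableEq E] (L : Finset E) (b : LTL E)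
    (hb : b.isBool) (hev : ∀ e ∈ b.events, e ∉ L)
    (hfls : ∀ (σ : ℕ → E) (i : ℕ), (∀ e ∈ b.events, σ i ≠ e) → ¬ LTL.satAt σ b i)
    (π : ℕ → E) (f : ℕ → ℕ) (hf : StrictMono f)
    (hran : ∀ i, (π i ∉ L ↔ ∃ k, f k = i)) :
    LTL.satAt π (LTL.alwEv b) 0 ↔ LTL.satAt (fun k => π (f k)) (LTL.alwEv b) 0 := by
  rw [satAt_alwEv, satAt_alwEv]
  constructor
  · intro h k _
    obtain ⟨m, hm, hsat⟩ := h (f k) (Nat.zero_le _)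
    have hex : ∃ e ∈ b.events, π m = e := by
      by_contra hc
      push_neg at hc
      exact hfls π m hc hsat
    obtain ⟨e, he, hpe⟩ := hex
    have : π m ∉ L := hpe ▸ hev e he
    obtain ⟨j, hj⟩ := (hran m).mp this
    refine ⟨j, ?_, ?_⟩
    · exact hf.le_iff_le.mp (by omega)
    · exact (bool_dep b hb π (fun k => π (f k)) m j (show π m = π (f j) by rw [hj])).mp hsat
  · intro h k _
    obtain ⟨m, hm, hsat⟩ := h k (Nat.zero_le _)
    refine ⟨f m, le_trans hm (hf.le_apply), ?_⟩
    exact (bool_dep b hb (fun k => π (f k)) π m (f m) rfl).mp hsat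

/-- GR(1) satisfaction is invariant under removal (stuttering) of events
not occurring in the formula, provided the projected trace is infinite. -/
theorem gr1_projection_invariance
    (SS L : Finset E) (hL : L ⊆ SS)
    (As Gs : List (LTL E))
    (hAs : ∀ b ∈ As, b.isBool ∧ (∀ e ∈ b.events, e ∈ SS ∧ e ∉ L) ∧
      (∀ (σ : ℕ → E) (i : ℕ), (∀ e ∈ b.events, σ i ≠ e) → ¬ LTL.satAt σ b i))
    (hGs : ∀ b ∈ Gs, b.isBool ∧ (∀ e ∈ b.events, e ∈ SS ∧ e ∉ L) ∧
      (∀ (σ : ℕ → E) (i : ℕ), (∀ e ∈ b.events, σ i ≠ e) → ¬ LTL.satAt σ b i))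
    (π : ℕ → E) (hπ : ∀ i, π i ∈ SS)
    (f : ℕ → ℕ) (hf : StrictMono f)
    (hran : ∀ i, (π i ∉ L ↔ ∃ k, f k = i)) :
    LTL.sat π (GR1 As Gs) ↔ LTL.sat (fun k => π (f k)) (GR1 As Gs) := by
  have key : ∀ l : List (LTL E), (∀ b ∈ l, b.isBool ∧ (∀ e ∈ b.events, e ∈ SS ∧ e ∉ L) ∧
        (∀ (τ : ℕ → E) (i : ℕ), (∀ e ∈ b.events, τ i ≠ e) → ¬ LTL.satAt τ b i)) →
      (LTL.satAt π (LTL.conjList (l.map LTL.alwEv)) 0 ↔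
       LTL.satAt (fun k => π (f k)) (LTL.conjList (l.map LTL.alwEv)) 0) := by
    intro l hl
    rw [satAt_conjList, satAt_conjList]
    constructor
    · intro h φ hφ
      simp only [List.mem_map] at hφ
      obtain ⟨b, hb, rfl⟩ := hφ
      obtain ⟨h1, h2, h3⟩ := hl b hb
      exact (alwEv_transfer L b h1 (fun e he => (h2 e he).2) h3 π f hf hran).mp
        (h _ (List.mem_map_of_mem (f := LTL.alwEv) hb))
    · intro h φ hφ
      simp only [List.mem_map] at hφ
      obtain ⟨b, hb, rfl⟩ := hφ
      obtain ⟨h1, h2, h3⟩ := hl b hb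
      exact (alwEv_transfer L b h1 (fun e he => (h2 e he).2) h3 π f hf hran).mpr
        (h _ (List.mem_map_of_mem (f := LTL.alwEv) hb))
  have hA := key As hAs
  have hG := key Gs hGs
  simp only [LTL.sat, GR1, LTL.imp, LTL.satAt]
  rw [hA, hG]

end CompSynth
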